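/- arXiv:2512.17458 — 8 statements merged into one kernel-verified Lean document; each statement's English description precedes it below -/
import Mathlib

section
/- Let n ≥ 2 and let w_k ∈ L_n (k ∈ ℕ) be the elementary wheel polynomials, defined as the coefficients of the formal power series W(T) = ∏_{i=1}^n (1 − x_i^{-1}T) · (∏_{i=1}^n (1 − x_i T))^{-1} over L_n. Then every w_k is a symmetric Laurent polynomial (invariant under the action of S_n permuting the variables), and w_k satisfies the wheel condition: for every tuple c = (c_1,…,c_n) of nonzero complex numbers with c_2 = c_1^{-1}, the evaluation of w_k at c equals the evaluation of w_k at the tuple obtained from c by replacing both c_1 and c_2 with 1. -/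
open scoped BigOperators
noncomputable section

abbrev L (n : ℕ) : Type := AddMonoidAlgebra ℂ (Fin n →₀ ℤ)

/-- The Laurent monomial `x_i ^ k` in `L n`. -/
def xpow {n : ℕ} (i : Fin n) (k : ℤ) : L n :=
  AddMonoidAlgebra.single (Finsupp.single i k) (1 : ℂ)

/-- The monoid homomorphism underlying evaluation at a tuple of nonzero complex numbers. -/
def evalMonoidHom {n : ℕ} (c : Fin n → ℂˣ) :
    Multiplicative (Fin n →₀ ℤ) →* ℂ where
  toFun m := ∏ i : Fin n, ((c i : ℂ) ^ (Multiplicative.toAdd m i))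
  map_one' := by simp
  map_mul' a b := by
    simp only [toAdd_mul, Finsupp.add_apply]
    rw [← Finset.prod_mul_distrib]
    exact Finset.prod_congr rfl fun i _ => zpow_add₀ (Units.ne_zero (c i)) _ _

/-- Evaluation of a Laurent polynomial at a tuple of nonzero complex numbers:
the `ℂ`-algebra map sending `x i` to `c i`. -/
def evalAt {n : ℕ} (c : Fin n → ℂˣ) : L n →ₐ[ℂ] ℂ :=
  AddMonoidAlgebra.lift ℂ ℂ (Fin n →₀ ℤ) (evalMonoidHom c)

/-- The action of a permutation `σ ∈ S_n` on `L n` permuting the variables. -/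
def permAlg {n : ℕ} (σ : Equiv.Perm (Fin n)) : L n ≃ₐ[ℂ] L n :=
  AddMonoidAlgebra.domCongr ℂ ℂ (Finsupp.domCongr σ)

-- auxiliary lemmas

lemma isUnit_factor {R : Type*} [CommRing R] (a : R) :
    IsUnit (1 - PowerSeries.C a * PowerSeries.X) := by
  rw [PowerSeries.isUnit_iff_constantCoeff]
  simp

lemma isUnit_prodFactor {R : Type*} [CommRing R] {ι : Type*} (s : Finset ι) (a : ι → R) :
    IsUnit (∏ i ∈ s, (1 - PowerSeries.C (a i) * PowerSeries.X)) := by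
  refine Finset.prod_induction _ IsUnit (fun _ _ => IsUnit.mul) isUnit_one ?_
  intro i _
  rw [PowerSeries.isUnit_iff_constantCoeff]
  simp

lemma map_hW {n : ℕ} {R : Type*} [CommRing R] (f : L n →+* R)
    {W : PowerSeries (L n)}
    (hW : W * (∏ i : Fin n, (1 - PowerSeries.C (xpow i 1) * PowerSeries.X))
        = ∏ i : Fin n, (1 - PowerSeries.C (xpow i (-1)) * PowerSeries.X)) :
    (PowerSeries.map f W) * (∏ i : Fin n, (1 - PowerSeries.C (f (xpow i 1)) * PowerSeries.X))
        = ∏ i : Fin n, (1 - PowerSeries.C (f (xpow i (-1))) * PowerSeries.X) := by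
  have := congrArg (PowerSeries.map f) hW
  simpa [map_prod, map_mul, map_sub, map_one, PowerSeries.map_C, PowerSeries.map_X] using this

lemma permAlg_xpow {n : ℕ} (σ : Equiv.Perm (Fin n)) (i : Fin n) (k : ℤ) :
    permAlg σ (xpow i k) = xpow (σ i) k := by
  simp [permAlg, xpow, AddMonoidAlgebra.domCongr_single]

lemma evalAt_xpow {n : ℕ} (c : Fin n → ℂˣ) (i : Fin n) (k : ℤ) :
    evalAt c (xpow i k) = (c i : ℂ) ^ k := by
  simp only [evalAt, xpow, AddMonoidAlgebra.lift_single, evalMonoidHom, MonoidHom.coe_mk,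
    OneHom.coe_mk, one_smul]
  rw [Finset.prod_eq_single i]
  · simp
  · intro b _ hb
    simp [Finsupp.single_apply, Ne.symm hb]
  · simp

/-- The elementary wheel polynomials `w k` (the coefficients of the
power series `W(T) = ∏ (1 - x i⁻¹ T) · (∏ (1 - x i T))⁻¹`, here characterized by
`W(T) · ∏ (1 - x i T) = ∏ (1 - x i⁻¹ T)`) are symmetric Laurent polynomials and
satisfy the wheel condition. -/
theorem elementary_wheel_polys_symmetric_and_wheel_condition
    (n : ℕ) (hn : 2 ≤ n)
    (W : PowerSeries (L n))
    (hW : W * (∏ i : Fin n, (1 - PowerSeries.C (xpow i 1) * PowerSeries.X))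
        = ∏ i : Fin n, (1 - PowerSeries.C (xpow i (-1)) * PowerSeries.X))
    (w : ℕ → L n) (hw : ∀ k, w k = PowerSeries.coeff k W) :
    (∀ k : ℕ, ∀ σ : Equiv.Perm (Fin n), permAlg σ (w k) = w k) ∧
    (∀ k : ℕ, ∀ c : Fin n → ℂˣ,
      c ⟨1, by omega⟩ = (c ⟨0, by omega⟩)⁻¹ →
      evalAt c (w k)
        = evalAt (Function.update (Function.update c ⟨0, by omega⟩ 1) ⟨1, by omega⟩ 1) (w k)) := by
  constructor
  · intro k σ
    have h := map_hW ((permAlg σ : L n →ₐ[ℂ] L n) : L n →+* L n) hW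
    have hx : ∀ (i : Fin n) (k : ℤ),
        (((permAlg σ : L n →ₐ[ℂ] L n) : L n →+* L n)) (xpow i k) = xpow (σ i) k :=
      fun i k => permAlg_xpow σ i k
    simp only [hx] at h
    rw [Equiv.prod_comp σ (fun j => 1 - PowerSeries.C (xpow j 1) * PowerSeries.X),
        Equiv.prod_comp σ (fun j => 1 - PowerSeries.C (xpow j (-1)) * PowerSeries.X)] at h
    have hWW : PowerSeries.map ((permAlg σ : L n →ₐ[ℂ] L n) : L n →+* L n) W = W :=
      IsUnit.mul_right_cancel
        (by simpa using isUnit_prodFactor Finset.univ (fun i : Fin n => xpow i 1))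
        (h.trans hW.symm)
    have e := congrArg (PowerSeries.coeff k) hWW
    rw [PowerSeries.coeff_map] at e
    rw [hw]
    exact e
  · intro k c hc
    set i0 : Fin n := ⟨0, by omega⟩ with hi0
    set i1 : Fin n := ⟨1, by omega⟩ with hi1
    have hne : i1 ≠ i0 := Fin.ne_of_val_ne (by norm_num)
    set c' := Function.update (Function.update c i0 1) i1 1 with hcdef
    set s : Finset (Fin n) := (Finset.univ.erase i0).erase i1 with hsdef
    have h1 := map_hW ((evalAt c : L n →ₐ[ℂ] ℂ) : L n →+* ℂ) hW
    have h2 := map_hW ((evalAt c' : L n →ₐ[ℂ] ℂ) : L n →+* ℂ) hW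
    have hx : ∀ (d : Fin n → ℂˣ) (i : Fin n) (k : ℤ),
        ((evalAt d : L n →ₐ[ℂ] ℂ) : L n →+* ℂ) (xpow i k) = (d i : ℂ) ^ k :=
      fun d i k => evalAt_xpow d i k
    simp only [hx, zpow_one, zpow_neg_one] at h1 h2
    have split : ∀ g : Fin n → ℂ,
        ∏ i : Fin n, (1 - PowerSeries.C (g i) * PowerSeries.X)
          = (1 - PowerSeries.C (g i0) * PowerSeries.X) *
            ((1 - PowerSeries.C (g i1) * PowerSeries.X) *
              ∏ i ∈ s, (1 - PowerSeries.C (g i) * PowerSeries.X)) := by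
      intro g
      rw [← Finset.mul_prod_erase _ _ (Finset.mem_univ i0),
          ← Finset.mul_prod_erase _ _ (Finset.mem_erase.mpr ⟨hne, Finset.mem_univ i1⟩)]
    rw [split (fun i => ((c i : ℂ))), split (fun i => ((c i : ℂ))⁻¹)] at h1
    rw [split (fun i => ((c' i : ℂ))), split (fun i => ((c' i : ℂ))⁻¹)] at h2
    have hs : ∀ i ∈ s, c' i = c i := by
      intro i hi
      rcases Finset.mem_erase.mp hi with ⟨h1i, hi2⟩
      rcases Finset.mem_erase.mp hi2 with ⟨h0i, _⟩
      simp [hcdef, Function.update_of_ne h1i, Function.update_of_ne h0i]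
    have hc0 : (c' i0 : ℂ) = 1 := by
      simp [hcdef, Function.update_of_ne (Ne.symm hne)]
    have hc1 : (c' i1 : ℂ) = 1 := by simp [hcdef]
    have ha1 : (c i1 : ℂ) = (c i0 : ℂ)⁻¹ := by
      rw [hc]; exact Units.val_inv_eq_inv_val _
    have hP : ∏ i ∈ s, (1 - PowerSeries.C ((c' i : ℂ)) * PowerSeries.X)
        = ∏ i ∈ s, (1 - PowerSeries.C ((c i : ℂ)) * PowerSeries.X) :=
      Finset.prod_congr rfl (fun i hi => by rw [hs i hi])
    have hQ : ∏ i ∈ s, (1 - PowerSeries.C ((c' i : ℂ))⁻¹ * PowerSeries.X)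
        = ∏ i ∈ s, (1 - PowerSeries.C ((c i : ℂ))⁻¹ * PowerSeries.X) :=
      Finset.prod_congr rfl (fun i hi => by rw [hs i hi])
    rw [hc0, hc1, hP, hQ] at h2
    simp only [inv_one] at h2
    rw [ha1, inv_inv] at h1
    set A := PowerSeries.map ((evalAt c : L n →ₐ[ℂ] ℂ) : L n →+* ℂ) W with hA
    set B := PowerSeries.map ((evalAt c' : L n →ₐ[ℂ] ℂ) : L n →+* ℂ) W with hB
    set P := ∏ i ∈ s, (1 - PowerSeries.C ((c i : ℂ)) * PowerSeries.X) with hPdef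
    set Q := ∏ i ∈ s, (1 - PowerSeries.C ((c i : ℂ))⁻¹ * PowerSeries.X) with hQdef
    set f0 := 1 - PowerSeries.C ((c i0 : ℂ)) * PowerSeries.X with hf0
    set f1 := 1 - PowerSeries.C ((c i0 : ℂ))⁻¹ * PowerSeries.X with hf1
    set d := 1 - PowerSeries.C (1 : ℂ) * PowerSeries.X with hd
    have hu : IsUnit (f0 * (f1 * P) * (d * d)) := by
      exact (((isUnit_factor _).mul ((isUnit_factor _).mul
        (isUnit_prodFactor s _))).mul ((isUnit_factor _).mul (isUnit_factor _)))
    have hAB : A = B := by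
      refine IsUnit.mul_right_cancel hu ?_
      linear_combination (d * d) * h1 - (f0 * f1) * h2
    have e := congrArg (PowerSeries.coeff k) hAB
    rw [hA, hB, PowerSeries.coeff_map, PowerSeries.coeff_map] at e
    rw [hw]
    exact e
end
end

section
/- Let n ≥ 1. In L_n, let e_n = x_1⋯x_n, let w_k be the elementary wheel polynomials (coefficients of W(T) = ∏_{i=1}^n (1 − x_i^{-1}T) · (∏_{i=1}^n (1 − x_i T))^{-1}), and let p_k^- = Σ_{i=1}^n (x_i^k − x_i^{-k}) be the power sum wheel polynomials. Then the ℂ-subalgebra of L_n generated by e_n, e_n^{-1} and all p_k^- (k ≥ 1) equals the ℂ-subalgebra of L_n generated by e_n, e_n^{-1} and all w_k (k ≥ 1). -/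
open scoped BigOperators
noncomputable section

open PowerSeries

instance (n : ℕ) : IsDomain (L n) := NoZeroDivisors.to_isDomain _

lemma xpow_pow {n : ℕ} (i : Fin n) (a : ℤ) (m : ℕ) : xpow i a ^ m = xpow i (m * a) := by
  simp [xpow, AddMonoidAlgebra.single_pow, Finsupp.smul_single, one_pow]

lemma geom {R : Type*} [CommRing R] (u : R) :
    (1 - C u * X) * PowerSeries.mk (fun k => u ^ k) = 1 := by
  ext k
  rw [sub_mul, one_mul, map_sub]
  cases k with
  | zero => simp
  | succ k =>
    rw [mul_comm (C u) X, mul_assoc, coeff_succ_X_mul, coeff_mk, coeff_one,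
      PowerSeries.coeff_C_mul, coeff_mk]
    simp [pow_succ, mul_comm]

lemma deriv_prod {R ι : Type*} [CommRing R] [DecidableEq ι] (s : Finset ι) (f : ι → R⟦X⟧) :
    d⁄dX R (∏ i ∈ s, f i) = ∑ i ∈ s, (d⁄dX R (f i)) * ∏ j ∈ s.erase i, f j := by
  induction s using Finset.induction with
  | empty => simp
  | @insert a s ha ih =>
    rw [Finset.prod_insert ha, Derivation.leibniz, smul_eq_mul, smul_eq_mul, ih,
      Finset.sum_insert ha, Finset.erase_insert ha]
    have hcong : ∀ i ∈ s, (d⁄dX R (f i)) * ∏ j ∈ (insert a s).erase i, f j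
        = f a * ((d⁄dX R (f i)) * ∏ j ∈ s.erase i, f j) := by
      intro i hi
      rw [Finset.erase_insert_of_ne (by rintro rfl; exact ha hi), Finset.prod_insert
        (by simp only [Finset.mem_erase]; rintro ⟨-, h⟩; exact ha h)]
      ring
    rw [Finset.sum_congr rfl hcong, ← Finset.mul_sum]
    ring

lemma deriv_factor {R : Type*} [CommRing R] (u : R) :
    d⁄dX R (1 - C u * X) = -(C u) := by
  rw [map_sub, Derivation.leibniz, derivative_X, derivative_C, Derivation.map_one_eq_zero]
  simp

lemma key1 {R ι : Type*} [CommRing R] [Fintype ι] [DecidableEq ι] (x y : ι → R) :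
    (PowerSeries.mk fun k => ∑ i, (x i ^ (k+1) - y i ^ (k+1)))
        * ((∏ i, (1 - C (x i) * X)) * (∏ i, (1 - C (y i) * X)))
      = (d⁄dX R (∏ i, (1 - C (y i) * X))) * (∏ i, (1 - C (x i) * X))
        - (d⁄dX R (∏ i, (1 - C (x i) * X))) * (∏ i, (1 - C (y i) * X)) := by
  set A := ∏ i, (1 - C (x i) * X) with hA
  set B := ∏ i, (1 - C (y i) * X) with hB
  have hGA : ∀ i : ι, PowerSeries.mk (fun k => x i ^ k) * A
      = ∏ j ∈ Finset.univ.erase i, (1 - C (x j) * X) := by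
    intro i
    rw [hA, ← Finset.mul_prod_erase Finset.univ _ (Finset.mem_univ i), ← mul_assoc,
      mul_comm (PowerSeries.mk _), geom, one_mul]
  have hGB : ∀ i : ι, PowerSeries.mk (fun k => y i ^ k) * B
      = ∏ j ∈ Finset.univ.erase i, (1 - C (y j) * X) := by
    intro i
    rw [hB, ← Finset.mul_prod_erase Finset.univ _ (Finset.mem_univ i), ← mul_assoc,
      mul_comm (PowerSeries.mk _), geom, one_mul]
  have hQ : (PowerSeries.mk fun k => ∑ i, (x i ^ (k+1) - y i ^ (k+1)))
      = ∑ i, (C (x i) * PowerSeries.mk (fun k => x i ^ k)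
            - C (y i) * PowerSeries.mk (fun k => y i ^ k)) := by
    ext k
    rw [PowerSeries.coeff_mk, map_sum]
    refine Finset.sum_congr rfl fun i _ => ?_
    rw [map_sub, PowerSeries.coeff_C_mul, PowerSeries.coeff_C_mul, PowerSeries.coeff_mk,
      PowerSeries.coeff_mk, pow_succ, pow_succ]
    ring
  rw [hQ, Finset.sum_mul, deriv_prod, deriv_prod, Finset.sum_mul, Finset.sum_mul,
    ← Finset.sum_sub_distrib]
  refine Finset.sum_congr rfl fun i _ => ?_
  rw [deriv_factor, deriv_factor]
  linear_combination (C (x i) * B) * hGA i - (C (y i) * A) * hGB i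


/-- With `eN = x 1 ⋯ x n`, `eN' = eN⁻¹`, `w k` the elementary wheel
polynomials (coefficients of `W(T) = ∏ (1 - x i⁻¹ T) · (∏ (1 - x i T))⁻¹`) and
`p k = ∑ i (x i ^ k - x i ^ (-k))` the power sum wheel polynomials, the `ℂ`-subalgebra
of `L n` generated by `eN, eN⁻¹` and all `p k` (`k ≥ 1`) equals the one generated by
`eN, eN⁻¹` and all `w k` (`k ≥ 1`). -/
theorem adjoin_powerSums_eq_adjoin_elementary_wheel
    (n : ℕ) (hn : 1 ≤ n)
    (W : PowerSeries (L n))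
    (hW : W * (∏ i : Fin n, (1 - PowerSeries.C (R := L n) (xpow i 1) * PowerSeries.X))
        = ∏ i : Fin n, (1 - PowerSeries.C (R := L n) (xpow i (-1)) * PowerSeries.X))
    (w : ℕ → L n)
    (hw : ∀ k, w k = PowerSeries.coeff (R := L n) k W)
    (p : ℕ → L n)
    (hp : ∀ k, p k = ∑ i : Fin n, (xpow i (k : ℤ) - xpow i (-(k : ℤ)))) :
    Algebra.adjoin ℂ
        ({∏ i : Fin n, xpow i 1, ∏ i : Fin n, xpow i (-1)} ∪ {y | ∃ k : ℕ, 1 ≤ k ∧ y = p k})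
      = Algebra.adjoin ℂ
        ({∏ i : Fin n, xpow i 1, ∏ i : Fin n, xpow i (-1)} ∪ {y | ∃ k : ℕ, 1 ≤ k ∧ y = w k}) := by
  classical
  set A := ∏ i : Fin n, (1 - PowerSeries.C (R := L n) (xpow i 1) * PowerSeries.X) with hA
  set B := ∏ i : Fin n, (1 - PowerSeries.C (R := L n) (xpow i (-1)) * PowerSeries.X) with hB
  have hcA : PowerSeries.constantCoeff (R := L n) A = 1 := by
    rw [hA, map_prod]; simp
  have hcB : PowerSeries.constantCoeff (R := L n) B = 1 := by
    rw [hB, map_prod]; simp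
  have hw0 : w 0 = 1 := by
    have h0 := congrArg (PowerSeries.constantCoeff (R := L n)) hW
    rw [map_mul, hcA, hcB, mul_one] at h0
    rw [hw 0, PowerSeries.coeff_zero_eq_constantCoeff, h0]
  have hABne : A * B ≠ 0 := by
    intro h0
    have h1 : PowerSeries.constantCoeff (R := L n) (A * B) = 1 := by
      rw [map_mul, hcA, hcB, mul_one]
    rw [h0, map_zero] at h1
    exact one_ne_zero h1.symm
  have hQ : (PowerSeries.mk fun k => p (k+1))
      = PowerSeries.mk fun k => ∑ i : Fin n, (xpow i 1 ^ (k+1) - xpow i (-1) ^ (k+1)) := by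
    refine PowerSeries.ext fun k => ?_
    rw [PowerSeries.coeff_mk, PowerSeries.coeff_mk, hp]
    refine Finset.sum_congr rfl fun i _ => ?_
    rw [xpow_pow, xpow_pow, mul_one, mul_neg_one]
  have hkey1 : (PowerSeries.mk fun k => ∑ i : Fin n, (xpow i 1 ^ (k+1) - xpow i (-1) ^ (k+1)))
      * (A * B) = (d⁄dX (L n) B) * A - (d⁄dX (L n) A) * B := key1 _ _
  rw [← hQ] at hkey1
  have hd := congrArg (d⁄dX (L n)) hW
  rw [Derivation.leibniz, smul_eq_mul, smul_eq_mul] at hd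
  have key2 : d⁄dX (L n) W = W * PowerSeries.mk fun k => p (k+1) :=
    mul_right_cancel₀ hABne (by linear_combination B * hd - W * hkey1 - (d⁄dX (L n) B) * hW)
  have hrec : ∀ m : ℕ, w (m+1) * ((m : L n) + 1)
      = ∑ j ∈ Finset.range (m+1), w j * p (m - j + 1) := by
    intro m
    have h := congrArg (PowerSeries.coeff (R := L n) m) key2
    rw [PowerSeries.coeff_derivative, PowerSeries.coeff_mul,
      Finset.Nat.sum_antidiagonal_eq_sum_range_succ_mk] at h
    simp only [PowerSeries.coeff_mk, ← hw] at h
    exact h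
  set PS : Set (L n) :=
    {∏ i : Fin n, xpow i 1, ∏ i : Fin n, xpow i (-1)} ∪ {y | ∃ k : ℕ, 1 ≤ k ∧ y = p k} with hPS
  set WS : Set (L n) :=
    {∏ i : Fin n, xpow i 1, ∏ i : Fin n, xpow i (-1)} ∪ {y | ∃ k : ℕ, 1 ≤ k ∧ y = w k} with hWS
  have hpP : ∀ k, 1 ≤ k → p k ∈ Algebra.adjoin ℂ PS := fun k hk =>
    Algebra.subset_adjoin (Or.inr ⟨k, hk, rfl⟩)
  have hwW : ∀ k, 1 ≤ k → w k ∈ Algebra.adjoin ℂ WS := fun k hk =>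
    Algebra.subset_adjoin (Or.inr ⟨k, hk, rfl⟩)
  have halg : ∀ m : ℕ, ((m : L n) + 1) = algebraMap ℂ (L n) ((m : ℂ) + 1) := by
    intro m; rw [map_add, map_natCast, map_one]
  have hwP : ∀ k, w k ∈ Algebra.adjoin ℂ PS := by
    intro k
    induction k using Nat.strong_induction_on with
    | _ k ih =>
      cases k with
      | zero => rw [hw0]; exact one_mem _
      | succ m =>
        have hne : ((m : ℂ) + 1) ≠ 0 := Nat.cast_add_one_ne_zero m
        have hsmul : w (m+1)
            = ((m : ℂ) + 1)⁻¹ • (∑ j ∈ Finset.range (m+1), w j * p (m - j + 1)) := by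
          rw [← hrec m, halg, mul_comm, ← Algebra.smul_def, smul_smul,
            inv_mul_cancel₀ hne, one_smul]
        rw [hsmul]
        refine Subalgebra.smul_mem _ (Subalgebra.sum_mem _ fun j hj => mul_mem
          (ih j (Finset.mem_range.mp hj)) (hpP _ (Nat.succ_le_succ (Nat.zero_le _)))) _
  have hpW : ∀ k, 1 ≤ k → p k ∈ Algebra.adjoin ℂ WS := by
    intro k
    induction k using Nat.strong_induction_on with
    | _ k ih =>
      cases k with
      | zero => intro h; exact absurd h (by norm_num)
      | succ m =>
        intro _
        have h := hrec m
        rw [Finset.sum_range_succ', hw0, one_mul, Nat.sub_zero] at h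
        have hpform : p (m+1) = w (m+1) * ((m : L n) + 1)
            - ∑ j ∈ Finset.range m, w (j+1) * p (m - (j+1) + 1) := by
          rw [h]; ring
        rw [hpform]
        refine sub_mem (mul_mem (hwW _ (Nat.succ_le_succ (Nat.zero_le _)))
          (add_mem (Subalgebra.natCast_mem _ m) (one_mem _)))
          (Subalgebra.sum_mem _ fun j hj => mul_mem (hwW _ (Nat.succ_le_succ (Nat.zero_le _)))
            (ih (m - (j+1) + 1) (by have := Finset.mem_range.mp hj; omega)
              (Nat.succ_le_succ (Nat.zero_le _))))
  apply le_antisymm <;> apply Algebra.adjoin_le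
  · rintro y (hy | ⟨k, hk, rfl⟩)
    · exact Algebra.subset_adjoin (Or.inl hy)
    · exact hpW k hk
  · rintro y (hy | ⟨k, hk, rfl⟩)
    · exact Algebra.subset_adjoin (Or.inl hy)
    · exact hwP k
end
end

section
/- Young diagrams are determined by their diagonal data: if λ and μ are Young diagrams such that for every integer i the number of cells of λ of content i equals the number of cells of μ of content i (m_λ(i) = m_μ(i) for all i ∈ ℤ), then λ = μ. -/
noncomputable section

/-- The content of a cell `(i, j)` of a Young diagram: `j - i`. -/
def cellContent (c : ℕ × ℕ) : ℤ := (c.2 : ℤ) - (c.1 : ℤ)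

/-- `diagCount lam d` is `m_λ(d)`, the number of cells of `lam` of content `d`. -/
def diagCount (lam : YoungDiagram) (d : ℤ) : ℕ :=
  (lam.cells.filter (fun c => cellContent c = d)).card

lemma lowerSet_mem_iff_lt_card (S : Finset ℕ)
    (hS : ∀ a b : ℕ, a ≤ b → b ∈ S → a ∈ S) (a : ℕ) : a ∈ S ↔ a < S.card := by
  constructor
  · intro ha
    have hsub : Finset.range (a + 1) ⊆ S := by
      intro x hx
      exact hS x a (by simpa using Nat.lt_succ_iff.mp (Finset.mem_range.mp hx)) ha
    have := Finset.card_le_card hsub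
    simpa using this
  · intro ha
    by_contra hna
    have hsub : S ⊆ Finset.range a := by
      intro b hb
      rcases lt_or_ge b a with h' | h'
      · simpa using h'
      · exact absurd (hS a b h' hb) hna
    have := Finset.card_le_card hsub
    simp at this
    omega

lemma mem_iff_min_lt_diagCount (lam : YoungDiagram) (i j : ℕ) :
    (i, j) ∈ lam ↔ min i j < diagCount lam ((j : ℤ) - (i : ℤ)) := by
  set d : ℤ := (j : ℤ) - (i : ℤ) with hd
  set f : ℕ → ℕ × ℕ := fun k => (k + (-d).toNat, k + d.toNat) with hf
  set T := lam.cells.filter (fun c => cellContent c = d) with hT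
  set S := T.image (fun c => min c.1 c.2) with hS
  have hcd : ∀ c : ℕ × ℕ, cellContent c = d → c = f (min c.1 c.2) := by
    rintro ⟨a, b⟩ hc
    simp only [cellContent] at hc
    simp only [hf, Prod.mk.injEq]
    constructor <;> omega
  have hcontent : ∀ k : ℕ, cellContent (f k) = d := by
    intro k
    simp only [cellContent, hf]
    push_cast
    omega
  have hminf : ∀ k : ℕ, min (f k).1 (f k).2 = k := by
    intro k
    simp only [hf]
    omega
  have hmemS : ∀ k : ℕ, k ∈ S ↔ f k ∈ lam := by
    intro k
    constructor
    · intro hk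
      rcases Finset.mem_image.mp hk with ⟨c, hc, hck⟩
      rcases Finset.mem_filter.mp hc with ⟨hc1, hc2⟩
      have := hcd c (by simpa using hc2)
      rw [hck] at this
      rw [← this]
      exact (YoungDiagram.mem_cells _).mp hc1
    · intro hk
      refine Finset.mem_image.mpr ⟨f k, Finset.mem_filter.mpr ⟨(YoungDiagram.mem_cells _).mpr hk, ?_⟩, hminf k⟩
      simpa using hcontent k
  have hlower : ∀ a b : ℕ, a ≤ b → b ∈ S → a ∈ S := by
    intro a b hab hb
    rw [hmemS] at hb ⊢
    exact lam.up_left_mem (by simp [hf]; omega) (by simp [hf]; omega) hb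
  have hcard : S.card = T.card := by
    apply Finset.card_image_of_injOn
    intro c₁ h₁ c₂ h₂ hmin
    simp only at hmin
    have e₁ := hcd c₁ (by simpa using (Finset.mem_filter.mp (Finset.mem_coe.mp h₁)).2)
    have e₂ := hcd c₂ (by simpa using (Finset.mem_filter.mp (Finset.mem_coe.mp h₂)).2)
    rw [e₁, e₂, hmin]
  have hij : (i, j) = f (min i j) := by
    simp only [hf, Prod.mk.injEq]
    constructor <;> omega
  have hcount : diagCount lam d = S.card := by rw [diagCount, hcard]
  rw [hcount, ← lowerSet_mem_iff_lt_card S hlower, hmemS, ← hij]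

/-- Young diagrams are determined by their diagonal data: if
`m_λ(i) = m_μ(i)` for all `i ∈ ℤ`, then `λ = μ`. -/
theorem youngDiagram_eq_of_diagCount_eq
    (lam mu : YoungDiagram) (h : ∀ d : ℤ, diagCount lam d = diagCount mu d) :
    lam = mu := by
  ext ⟨i, j⟩
  simp only [YoungDiagram.mem_cells]
  rw [mem_iff_min_lt_diagCount, mem_iff_min_lt_diagCount, h]
end
end

section
/- Let q, t be nonzero complex numbers such that q is not a root of unity and t ≠ q^a and t ≠ −q^a for every integer a. Then the map λ ↦ W(λ,q,t) from Young diagrams to rational functions is injective: if λ and μ are Young diagrams with W(λ,q,t) = W(μ,q,t), then λ = μ. -/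
noncomputable section

/-- The rational function
`W(λ,q,t) = ∏_{c∈λ}(1 − t⁻¹q^{−2·ct(c)}T) / ∏_{c∈λ}(1 − t·q^{2·ct(c)}T) ∈ RatFunc ℂ`. -/
def WFun (q t : ℂˣ) (lam : YoungDiagram) : RatFunc ℂ :=
  (∏ c ∈ lam.cells,
      (1 - RatFunc.C ((t : ℂ)⁻¹ * (q : ℂ) ^ (-2 * cellContent c)) * RatFunc.X)) /
  (∏ c ∈ lam.cells,
      (1 - RatFunc.C ((t : ℂ) * (q : ℂ) ^ (2 * cellContent c)) * RatFunc.X))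

open Polynomial in
lemma one_sub_C_mul_X_eq (c : ℂ) (hc : c ≠ 0) :
    (1 - C c * X : ℂ[X]) = C (-c) * (X - C c⁻¹) := by
  rw [mul_sub, ← C_mul, neg_mul, mul_inv_cancel₀ hc, map_neg, map_neg, C_1]
  ring

open Polynomial in
lemma one_sub_C_mul_X_ne_zero (c : ℂ) : (1 - C c * X : ℂ[X]) ≠ 0 := by
  intro h
  have := congrArg (fun p : ℂ[X] => p.coeff 0) h
  simp at this

open Polynomial in
lemma roots_one_sub_C_mul_X (c : ℂ) (hc : c ≠ 0) :
    (1 - C c * X : ℂ[X]).roots = {c⁻¹} := by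
  rw [one_sub_C_mul_X_eq c hc, roots_C_mul _ (neg_ne_zero.mpr hc), roots_X_sub_C]

open Polynomial in
lemma alg_factor (c : ℂ) :
    algebraMap ℂ[X] (RatFunc ℂ) (1 - C c * X) = 1 - RatFunc.C c * RatFunc.X := by
  rw [map_sub, map_one, map_mul, RatFunc.algebraMap_C, RatFunc.algebraMap_X]

/-- Key combinatorial fact: membership in a Young diagram is determined by the
diagonal counts. -/
lemma mem_iff_min_lt (lam : YoungDiagram) (i j : ℕ) :
    (i, j) ∈ lam ↔ min i j < diagCount lam ((j : ℤ) - i) := by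
  constructor
  · intro hmem
    have hcard : (Finset.range (min i j + 1)).card ≤
        (lam.cells.filter (fun c => cellContent c = (j : ℤ) - i)).card := by
      apply Finset.card_le_card_of_injOn (fun s => (i - s, j - s))
      · intro s hs
        simp only [Finset.mem_coe, Finset.mem_range] at hs
        have hsi : s ≤ i := le_trans (Nat.lt_succ_iff.mp hs) (min_le_left _ _)
        have hsj : s ≤ j := le_trans (Nat.lt_succ_iff.mp hs) (min_le_right _ _)
        rw [Finset.mem_coe, Finset.mem_filter]
        constructor
        · rw [YoungDiagram.mem_cells]
          exact lam.up_left_mem (Nat.sub_le _ _) (Nat.sub_le _ _) hmem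
        · simp only [cellContent]
          push_cast [Nat.cast_sub hsi, Nat.cast_sub hsj]
          ring
      · intro s hs s' hs' h
        simp only [Finset.mem_coe, Finset.mem_range, Nat.lt_succ_iff] at hs hs'
        have hsi : s ≤ i := le_trans hs (min_le_left _ _)
        have hsi' : s' ≤ i := le_trans hs' (min_le_left _ _)
        rw [Prod.mk.injEq] at h
        omega
    simp only [Finset.card_range] at hcard
    exact lt_of_lt_of_le (Nat.lt_succ_self _) hcard
  · intro h
    by_contra hmem
    have hcard : (lam.cells.filter (fun c => cellContent c = (j : ℤ) - i)).card ≤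
        (Finset.range (min i j)).card := by
      apply Finset.card_le_card_of_injOn (fun c => min c.1 c.2)
      · rintro ⟨a, b⟩ hc
        replace hc : (a, b) ∈ (lam.cells.filter (fun c => cellContent c = (j : ℤ) - i)) := hc
        rw [Finset.mem_filter] at hc
        simp only [Finset.mem_coe, Finset.mem_filter, YoungDiagram.mem_cells, cellContent] at hc
        obtain ⟨hab, hct⟩ := hc
        have hni : ¬(i ≤ a ∧ j ≤ b) := by
          rintro ⟨h1, h2⟩
          exact hmem (lam.up_left_mem h1 h2 hab)
        simp only [Finset.mem_coe, Finset.mem_range]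
        omega
      · rintro ⟨a, b⟩ hc ⟨a', b'⟩ hc' h
        replace hc : (a, b) ∈ (lam.cells.filter (fun c => cellContent c = (j : ℤ) - i)) := hc
        replace hc' : (a', b') ∈ (lam.cells.filter (fun c => cellContent c = (j : ℤ) - i)) := hc'
        rw [Finset.mem_filter] at hc hc'
        simp only [Finset.mem_coe, Finset.mem_filter, cellContent] at hc hc'
        simp only at h
        have h1 := hc.2
        have h2 := hc'.2
        have : a = a' ∧ b = b' := by omega
        simp [Prod.ext_iff, this.1, this.2]
    simp only [Finset.card_range] at hcard
    exact absurd h (not_lt.mpr hcard)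

open Polynomial in
/-- For `q` not a root of unity and `t ≠ ±q^a` for all integers `a`,
the map `λ ↦ W(λ,q,t)` from Young diagrams to rational functions is injective. -/
theorem WFun_injective_of_generic
    (q t : ℂˣ)
    (hq : ∀ k : ℕ, 0 < k → q ^ k ≠ 1)
    (ht : ∀ a : ℤ, t ≠ q ^ a ∧ t ≠ -(q ^ a)) :
    ∀ lam mu : YoungDiagram, WFun q t lam = WFun q t mu → lam = mu := by
  have hqz : (q : ℂ) ≠ 0 := q.ne_zero
  have htz : (t : ℂ) ≠ 0 := t.ne_zero
  have hq' : ∀ n : ℤ, 0 < n → (q : ℂ) ^ n ≠ 1 := by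
    intro n hn hne
    refine hq n.toNat (by omega) (Units.ext ?_)
    rw [Units.val_pow_eq_pow_val, Units.val_one, ← hne, ← zpow_natCast]
    congr 1
    omega
  have hq'' : ∀ n : ℤ, (q : ℂ) ^ n = 1 → n = 0 := by
    intro n hn
    by_contra h0
    rcases lt_or_gt_of_ne h0 with hlt | hgt
    · exact hq' (-n) (by omega) (by rw [zpow_neg, hn, inv_one])
    · exact hq' n hgt hn
  set A : ℤ → ℂ := fun d => (t : ℂ) * (q : ℂ) ^ (2 * d) with hA
  have hA0 : ∀ d, A d ≠ 0 := fun d => mul_ne_zero htz (zpow_ne_zero _ hqz)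
  have hAinj : ∀ d e, A d = A e → d = e := by
    intro d e hde
    have h1 : (q : ℂ) ^ (2 * d) = (q : ℂ) ^ (2 * e) := mul_left_cancel₀ htz hde
    have h2 : (q : ℂ) ^ (2 * d - 2 * e) = 1 := by
      rw [zpow_sub₀ hqz, h1, div_self (zpow_ne_zero _ hqz)]
    have := hq'' _ h2
    omega
  have hAb : ∀ d e, A d ≠ (A e)⁻¹ := by
    intro d e hde
    have h1 : A d * A e = 1 := by rw [hde, inv_mul_cancel₀ (hA0 e)]
    have h3 : (t : ℂ) * (t : ℂ) * ((q : ℂ) ^ (2 * d) * (q : ℂ) ^ (2 * e)) = 1 := by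
      rw [← h1, hA]; ring
    have h4 : (q : ℂ) ^ (2 * d) * (q : ℂ) ^ (2 * e) = (q : ℂ) ^ (d + e) * (q : ℂ) ^ (d + e) := by
      rw [← zpow_add₀ hqz, ← zpow_add₀ hqz]
      congr 1
      ring
    have h5 : ((t : ℂ) * (q : ℂ) ^ (d + e)) * ((t : ℂ) * (q : ℂ) ^ (d + e)) = 1 := by
      rw [← h3, h4]; ring
    rcases mul_self_eq_one_iff.mp h5 with h6 | h6
    · refine (ht (-(d + e))).1 (Units.ext ?_)
      rw [Units.val_zpow_eq_zpow_val, zpow_neg]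
      exact eq_inv_of_mul_eq_one_left h6
    · refine (ht (-(d + e))).2 (Units.ext ?_)
      rw [Units.val_neg, Units.val_zpow_eq_zpow_val, zpow_neg]
      have hz : (q : ℂ) ^ (d + e) ≠ 0 := zpow_ne_zero _ hqz
      field_simp
      linear_combination h6
  have hcoeff : ∀ d : ℤ, (t : ℂ)⁻¹ * (q : ℂ) ^ (-2 * d) = (A d)⁻¹ := by
    intro d
    rw [hA]
    simp only
    rw [mul_inv, ← zpow_neg]
    congr 2
    ring
  have hNz : ∀ ν : YoungDiagram,
      (∏ c ∈ ν.cells, (1 - C ((A (cellContent c))⁻¹) * X) : ℂ[X]) ≠ 0 :=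
    fun ν => Finset.prod_ne_zero_iff.mpr fun c _ => one_sub_C_mul_X_ne_zero _
  have hDz : ∀ ν : YoungDiagram,
      (∏ c ∈ ν.cells, (1 - C (A (cellContent c)) * X) : ℂ[X]) ≠ 0 :=
    fun ν => Finset.prod_ne_zero_iff.mpr fun c _ => one_sub_C_mul_X_ne_zero _
  have hW : ∀ ν : YoungDiagram, WFun q t ν =
      algebraMap ℂ[X] (RatFunc ℂ) (∏ c ∈ ν.cells, (1 - C ((A (cellContent c))⁻¹) * X)) /
      algebraMap ℂ[X] (RatFunc ℂ) (∏ c ∈ ν.cells, (1 - C (A (cellContent c)) * X)) := by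
    intro ν
    rw [WFun, map_prod, map_prod]
    congr 1
    · refine Finset.prod_congr rfl fun c _ => ?_
      rw [alg_factor, hcoeff]
    · refine Finset.prod_congr rfl fun c _ => ?_
      rw [alg_factor, hA]
  have hrootsN : ∀ ν : YoungDiagram,
      (∏ c ∈ ν.cells, (1 - C ((A (cellContent c))⁻¹) * X) : ℂ[X]).roots
        = ν.cells.val.map (fun c => A (cellContent c)) := by
    intro ν
    rw [Polynomial.roots_prod _ _ (hNz ν)]
    have hb : ∀ c ∈ ν.cells.val,
        (1 - C ((A (cellContent c))⁻¹) * X : ℂ[X]).roots = {A (cellContent c)} := by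
      intro c _
      rw [roots_one_sub_C_mul_X _ (inv_ne_zero (hA0 _)), inv_inv]
    rw [Multiset.bind_congr hb, Multiset.bind_singleton]
  have hrootsD : ∀ ν : YoungDiagram,
      (∏ c ∈ ν.cells, (1 - C (A (cellContent c)) * X) : ℂ[X]).roots
        = ν.cells.val.map (fun c => (A (cellContent c))⁻¹) := by
    intro ν
    rw [Polynomial.roots_prod _ _ (hDz ν)]
    have hb : ∀ c ∈ ν.cells.val,
        (1 - C (A (cellContent c)) * X : ℂ[X]).roots = {(A (cellContent c))⁻¹} := by
      intro c _
      rw [roots_one_sub_C_mul_X _ (hA0 _)]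
    rw [Multiset.bind_congr hb, Multiset.bind_singleton]
  intro lam mu h
  rw [hW lam, hW mu,
    div_eq_div_iff (RatFunc.algebraMap_ne_zero (hDz lam)) (RatFunc.algebraMap_ne_zero (hDz mu)),
    ← map_mul, ← map_mul] at h
  have hpoly := RatFunc.algebraMap_injective ℂ h
  have hmult := congrArg Polynomial.roots hpoly
  rw [Polynomial.roots_mul (mul_ne_zero (hNz lam) (hDz mu)),
      Polynomial.roots_mul (mul_ne_zero (hNz mu) (hDz lam)),
      hrootsN, hrootsN, hrootsD, hrootsD] at hmult
  have hcount : ∀ d : ℤ, diagCount lam d = diagCount mu d := by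
    intro d
    have hzero : ∀ ν : YoungDiagram,
        (ν.cells.val.filter (fun c => A d = (A (cellContent c))⁻¹)) = 0 :=
      fun ν => Multiset.filter_eq_nil.mpr fun c _ hce => hAb d (cellContent c) hce
    have hdc : ∀ ν : YoungDiagram,
        Multiset.card (ν.cells.val.filter (fun c => A d = A (cellContent c)))
          = diagCount ν d := by
      intro ν
      rw [diagCount, Finset.card_def, Finset.filter_val]
      congr 1
      refine Multiset.filter_congr fun c _ => ?_
      constructor
      · intro hc
        exact hAinj _ _ hc.symm
      · intro hc
        rw [hc]
    have hc := congrArg (Multiset.count (A d)) hmult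
    rw [Multiset.count_add, Multiset.count_add, Multiset.count_map, Multiset.count_map,
        Multiset.count_map, Multiset.count_map, hzero lam, hzero mu, hdc lam, hdc mu] at hc
    simpa using hc
  ext ⟨i, j⟩
  rw [YoungDiagram.mem_cells, YoungDiagram.mem_cells, mem_iff_min_lt, mem_iff_min_lt, hcount]
end
end

section
/- Let n ≥ 4 and let q be a nonzero complex number, and set t = q. Then the Young diagrams of the partitions (n−2, 2) and (n−2) satisfy W((n−2,2), q, q) = W((n−2), q, q). In particular, for t = q the function λ ↦ W(λ,q,t) does not separate the pair of distinct partitions (n−2,2) and (n−2) of n and n−2. -/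
noncomputable section

lemma one_sub_CX_ne_zero (a : ℂ) :
    (1 : RatFunc ℂ) - RatFunc.C a * RatFunc.X ≠ 0 := by
  have h1 : (1 : RatFunc ℂ) - RatFunc.C a * RatFunc.X =
      algebraMap (Polynomial ℂ) (RatFunc ℂ) (1 - Polynomial.C a * Polynomial.X) := by
    simp [RatFunc.algebraMap_C, RatFunc.algebraMap_X, map_sub, map_mul]
  rw [h1]
  apply RatFunc.algebraMap_ne_zero
  intro h
  have := congrArg (fun p => Polynomial.coeff p 0) h
  simp at this

/-- For `n ≥ 4` and `t = q`, the Young diagrams of the partitions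
`(n−2, 2)` and `(n−2)` have the same `W`-function, although they are distinct. -/
theorem WFun_not_injective_t_eq_q
    (n : ℕ) (hn : 4 ≤ n) (q : ℂˣ) :
    let lam := YoungDiagram.ofRowLens [n - 2, 2] (by simp [List.sortedGE_iff_pairwise]; omega)
    let mu := YoungDiagram.ofRowLens [n - 2] (by simp [List.sortedGE_iff_pairwise])
    WFun q q lam = WFun q q mu ∧ lam ≠ mu := by
  intro lam mu
  have h10 : ((1, 0) : ℕ × ℕ) ∈ lam := by
    rw [YoungDiagram.mem_ofRowLens]
    exact ⟨by simp, by simp⟩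
  have h10mu : ((1, 0) : ℕ × ℕ) ∉ mu := by
    rw [YoungDiagram.mem_ofRowLens]
    rintro ⟨h, -⟩
    simp at h
  constructor
  · -- cells equality
    have hcells : lam.cells = insert (1, 0) (insert (1, 1) mu.cells) := by
      ext ⟨i, j⟩
      simp only [lam, mu, Finset.mem_insert, YoungDiagram.mem_cells,
        YoungDiagram.mem_ofRowLens, Prod.mk.injEq]
      match i with
      | 0 => simp
      | 1 => simp; omega
      | (k+2) => simp
    have h11 : ((1, 1) : ℕ × ℕ) ∉ mu.cells := by
      rw [YoungDiagram.mem_cells, YoungDiagram.mem_ofRowLens]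
      rintro ⟨h, -⟩
      simp at h
    have h10' : ((1, 0) : ℕ × ℕ) ∉ insert ((1, 1) : ℕ × ℕ) mu.cells := by
      simp only [Finset.mem_insert, YoungDiagram.mem_cells]
      rintro (h | h)
      · exact absurd h (by simp)
      · exact h10mu h
    unfold WFun
    rw [hcells, Finset.prod_insert h10', Finset.prod_insert h11,
      Finset.prod_insert h10', Finset.prod_insert h11]
    have c10 : cellContent (1, 0) = -1 := by simp [cellContent]
    have c11 : cellContent (1, 1) = 0 := by simp [cellContent]
    rw [c10, c11]
    have hq : (q : ℂ) ≠ 0 := q.ne_zero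
    have e1 : (q : ℂ)⁻¹ * (q : ℂ) ^ (-2 * (-1 : ℤ)) = (q : ℂ) := by
      norm_num [zpow_two]
      rw [pow_two, inv_mul_cancel_left₀ hq]
    have e2 : (q : ℂ)⁻¹ * (q : ℂ) ^ (-2 * (0 : ℤ)) = (q : ℂ)⁻¹ := by
      norm_num
    have e3 : (q : ℂ) * (q : ℂ) ^ (2 * (-1 : ℤ)) = (q : ℂ)⁻¹ := by
      norm_num [zpow_neg, zpow_two]
      rw [pow_two, mul_inv, mul_inv_cancel_left₀ hq]
    have e4 : (q : ℂ) * (q : ℂ) ^ (2 * (0 : ℤ)) = (q : ℂ) := by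
      norm_num
    rw [e1, e2, e3, e4]
    rw [show ∀ a b c d : RatFunc ℂ, a * (b * c) / (b * (a * d)) = (a * b) * c / ((a * b) * d) by
      intros; ring_nf]
    rw [mul_div_mul_left]
    exact mul_ne_zero (one_sub_CX_ne_zero _) (one_sub_CX_ne_zero _)
  · intro h
    rw [h] at h10
    exact h10mu h10
end
end

section
/- Let q, t be nonzero complex numbers with q not a root of unity, and let μ ⊆ λ be Young diagrams. For i ∈ ℤ let m_{λ/μ}(i) denote the number of cells of λ\μ of content i. Then W(λ,q,t) = W(μ,q,t) if and only if for every integer i with m_{λ/μ}(i) > 0 there exists an integer j with m_{λ/μ}(j) = m_{λ/μ}(i) and (t·q^{2i})·(t·q^{2j}) = 1 (i.e. every diagonal of λ/μ is (q,t)-paired with a diagonal of λ/μ of the same length). -/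
noncomputable section

/-- `skewDiagCount lam mu d` is `m_{λ/μ}(d)`, the number of cells of `λ\μ` of content `d`. -/
def skewDiagCount (lam mu : YoungDiagram) (d : ℤ) : ℕ :=
  ((lam.cells \ mu.cells).filter (fun c => cellContent c = d)).card

/-- The skew analogue `W(λ/μ,q,t)`, a product over the cells of `λ\μ`. -/
def WSkew (q t : ℂˣ) (lam mu : YoungDiagram) : RatFunc ℂ :=
  (∏ c ∈ lam.cells \ mu.cells,
      (1 - RatFunc.C ((t : ℂ)⁻¹ * (q : ℂ) ^ (-2 * cellContent c)) * RatFunc.X)) /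
  (∏ c ∈ lam.cells \ mu.cells,
      (1 - RatFunc.C ((t : ℂ) * (q : ℂ) ^ (2 * cellContent c)) * RatFunc.X))

namespace WAux

open Polynomial

/-- `x i = t q^{2i}` as a complex number. -/
def xv (q t : ℂˣ) (i : ℤ) : ℂ := (t : ℂ) * (q : ℂ) ^ (2 * i)

lemma xv_ne_zero (q t : ℂˣ) (i : ℤ) : xv q t i ≠ 0 := by
  have : (q : ℂ) ≠ 0 := q.ne_zero
  simp [xv, zpow_ne_zero, this, t.ne_zero]

lemma q_zpow_ne_one (q : ℂˣ) (hq : ∀ k : ℕ, 0 < k → q ^ k ≠ 1)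
    {n : ℤ} (hn : n ≠ 0) : (q : ℂ) ^ n ≠ 1 := by
  intro hcontra
  have hu : (q : ℂˣ) ^ n = 1 := by
    apply Units.ext
    simpa [Units.val_zpow_eq_zpow_val] using hcontra
  rcases lt_or_gt_of_ne hn with hlt | hgt
  · have : q ^ (-n).toNat ≠ 1 := hq _ (by omega)
    apply this
    have h2 : (q : ℂˣ) ^ (-n) = 1 := by rw [zpow_neg, hu, inv_one]
    rw [← zpow_natCast, Int.toNat_of_nonneg (by omega)]
    exact h2
  · have : q ^ n.toNat ≠ 1 := hq _ (by omega)
    apply this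
    rw [← zpow_natCast, Int.toNat_of_nonneg (by omega)]
    exact hu

lemma xv_injective (q t : ℂˣ) (hq : ∀ k : ℕ, 0 < k → q ^ k ≠ 1) :
    Function.Injective (xv q t) := by
  intro i j hij
  by_contra hne
  have hqne : (q : ℂ) ≠ 0 := q.ne_zero
  have h1 : (q : ℂ) ^ (2 * i) = (q : ℂ) ^ (2 * j) :=
    mul_left_cancel₀ (t.ne_zero) hij
  have h2 : (q : ℂ) ^ (2 * i - 2 * j) = 1 := by
    rw [zpow_sub₀ hqne, h1, div_self (zpow_ne_zero _ hqne)]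
  exact q_zpow_ne_one q hq (by omega) h2

lemma factor_ne_zero (a : ℂ) : (1 - C a * X : ℂ[X]) ≠ 0 := by
  intro hzero
  have h0 : ((1 : ℂ[X]) - C a * X).coeff 0 = 1 := by simp
  rw [hzero] at h0
  simp at h0

lemma factor_eq (a : ℂ) (ha : a ≠ 0) :
    (1 - C a * X : ℂ[X]) = C (-a) * (X - C a⁻¹) := by
  rw [map_neg, neg_mul, mul_sub, ← C_mul, mul_inv_cancel₀ ha, map_one]
  ring

lemma roots_factor (a : ℂ) (ha : a ≠ 0) :
    (1 - C a * X : ℂ[X]).roots = {a⁻¹} := by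
  rw [factor_eq a ha, roots_C_mul _ (neg_ne_zero.mpr ha), roots_X_sub_C]

lemma roots_prodFactor (s : Finset (ℕ × ℕ)) (g : ℕ × ℕ → ℂ) (hg : ∀ c, g c ≠ 0) :
    (∏ c ∈ s, (1 - C (g c) * X : ℂ[X])).roots = s.val.map (fun c => (g c)⁻¹) := by
  have hne : (∏ c ∈ s, (1 - C (g c) * X : ℂ[X])) ≠ 0 :=
    Finset.prod_ne_zero_iff.mpr fun c _ => factor_ne_zero _
  rw [roots_prod _ _ hne]
  rw [show (s.val.bind fun c => (1 - C (g c) * X : ℂ[X]).roots)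
      = s.val.bind (fun c => ({(g c)⁻¹} : Multiset ℂ)) from
    Multiset.bind_congr (fun c _ => roots_factor _ (hg c))]
  simp [Multiset.bind_singleton]

lemma count_map_eq (s : Finset (ℕ × ℕ)) (f : ℕ × ℕ → ℂ) (z : ℂ) :
    (s.val.map f).count z = (s.filter (fun c => f c = z)).card := by
  classical
  rw [Multiset.count_map]
  rw [Finset.card_filter, Finset.sum_boole]
  simp [Finset.filter, eq_comm]

lemma mem_image_iff_pos (s : Finset (ℕ × ℕ)) (g : ℕ × ℕ → ℤ) (i : ℤ) :
    i ∈ s.image g ↔ 0 < (s.filter (fun c => g c = i)).card := by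
  rw [Finset.card_pos, Finset.filter_nonempty_iff, Finset.mem_image]

lemma key (q t : ℂˣ) (hq : ∀ k : ℕ, 0 < k → q ^ k ≠ 1)
    (ct : ℕ × ℕ → ℤ) (s : Finset (ℕ × ℕ)) :
    (∏ c ∈ s, (1 - C ((xv q t (ct c))⁻¹) * X : ℂ[X])) =
      (∏ c ∈ s, (1 - C (xv q t (ct c)) * X : ℂ[X])) ↔
    ∀ i : ℤ, 0 < (s.filter (fun c => ct c = i)).card →
      ∃ j : ℤ, (s.filter (fun c => ct c = j)).card = (s.filter (fun c => ct c = i)).card ∧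
        xv q t i * xv q t j = 1 := by
  classical
  have hinj := xv_injective q t hq
  have hne := xv_ne_zero q t
  constructor
  · intro hEq i hi
    have hrootsL : (∏ c ∈ s, (1 - C ((xv q t (ct c))⁻¹) * X : ℂ[X])).roots
        = s.val.map (fun c => xv q t (ct c)) := by
      rw [roots_prodFactor s (fun c => (xv q t (ct c))⁻¹) (fun c => inv_ne_zero (hne _))]
      simp
    have hrootsR : (∏ c ∈ s, (1 - C (xv q t (ct c)) * X : ℂ[X])).roots
        = s.val.map (fun c => (xv q t (ct c))⁻¹) :=
      roots_prodFactor s (fun c => xv q t (ct c)) (fun c => hne _)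
    have hcount : (s.filter (fun c => xv q t (ct c) = (xv q t i)⁻¹)).card
        = (s.filter (fun c => (xv q t (ct c))⁻¹ = (xv q t i)⁻¹)).card := by
      rw [← count_map_eq, ← count_map_eq, ← hrootsL, ← hrootsR, hEq]
    have hR : (s.filter (fun c => (xv q t (ct c))⁻¹ = (xv q t i)⁻¹)).card
        = (s.filter (fun c => ct c = i)).card := by
      congr 1
      apply Finset.filter_congr
      intro c _
      simp only [inv_inj]
      exact ⟨fun hc => hinj hc, fun hc => by rw [hc]⟩
    have hpos : 0 < (s.filter (fun c => xv q t (ct c) = (xv q t i)⁻¹)).card := by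
      rw [hcount, hR]; exact hi
    obtain ⟨c₀, hc₀⟩ := Finset.card_pos.mp hpos
    rw [Finset.mem_filter] at hc₀
    refine ⟨ct c₀, ?_, ?_⟩
    · have hj : (s.filter (fun c => ct c = ct c₀)).card
          = (s.filter (fun c => xv q t (ct c) = (xv q t i)⁻¹)).card := by
        congr 1
        apply Finset.filter_congr
        intro c _
        rw [← hc₀.2]
        exact ⟨fun hc => by rw [hc], fun hc => hinj hc⟩
      rw [hj, hcount, hR]
    · rw [hc₀.2, mul_inv_cancel₀ (hne i)]
  · intro hcond
    rw [Finset.prod_comp (fun i => (1 - C ((xv q t i)⁻¹) * X : ℂ[X])) ct,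
        Finset.prod_comp (fun i => (1 - C (xv q t i) * X : ℂ[X])) ct]
    set σ : ℤ → ℤ := fun a =>
      if h : 0 < (s.filter (fun c => ct c = a)).card then Classical.choose (hcond a h) else a
      with hσ
    have hσ1 : ∀ a, 0 < (s.filter (fun c => ct c = a)).card →
        (s.filter (fun c => ct c = σ a)).card = (s.filter (fun c => ct c = a)).card := by
      intro a ha
      rw [hσ]; simp only [ha, dif_pos]
      exact (Classical.choose_spec (hcond a ha)).1
    have hσ2 : ∀ a, 0 < (s.filter (fun c => ct c = a)).card →
        xv q t (σ a) = (xv q t a)⁻¹ := by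
      intro a ha
      rw [hσ]; simp only [ha, dif_pos]
      exact ((inv_eq_of_mul_eq_one_right (Classical.choose_spec (hcond a ha)).2)).symm
    refine Finset.prod_bij (fun a _ => σ a) ?_ ?_ ?_ ?_
    · intro a ha
      rw [mem_image_iff_pos] at ha ⊢
      rw [hσ1 a ha]; exact ha
    · intro a₁ ha₁ a₂ ha₂ heq
      rw [mem_image_iff_pos] at ha₁ ha₂
      apply hinj
      have : xv q t (σ a₁) = xv q t (σ a₂) := congrArg (xv q t) heq
      rw [hσ2 a₁ ha₁, hσ2 a₂ ha₂, inv_inj] at this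
      exact this
    · intro b hb
      rw [mem_image_iff_pos] at hb
      have hσb : 0 < (s.filter (fun c => ct c = σ b)).card := by rw [hσ1 b hb]; exact hb
      refine ⟨σ b, (mem_image_iff_pos s ct (σ b)).mpr hσb, ?_⟩
      apply hinj
      rw [hσ2 (σ b) hσb, hσ2 b hb, inv_inv]
    · intro a ha
      rw [mem_image_iff_pos] at ha
      rw [hσ1 a ha, hσ2 a ha]

/-- `WFun` as a quotient of images of polynomials. -/
lemma WFun_eq (q t : ℂˣ) (nu : YoungDiagram) :
    WFun q t nu =
      algebraMap ℂ[X] (RatFunc ℂ)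
          (∏ c ∈ nu.cells, (1 - C ((xv q t (cellContent c))⁻¹) * X)) /
      algebraMap ℂ[X] (RatFunc ℂ)
          (∏ c ∈ nu.cells, (1 - C (xv q t (cellContent c)) * X)) := by
  unfold WFun
  rw [map_prod, map_prod]
  congr 1 <;> refine Finset.prod_congr rfl fun c _ => ?_
  · have hx : (t : ℂ)⁻¹ * (q : ℂ) ^ (-2 * cellContent c) = (xv q t (cellContent c))⁻¹ := by
      rw [xv, mul_inv, ← zpow_neg, neg_mul]
    rw [← hx]
    simp [RatFunc.algebraMap_C, RatFunc.algebraMap_X]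
  · simp [xv, RatFunc.algebraMap_C, RatFunc.algebraMap_X]

end WAux

open Polynomial WAux

/-- For `q` not a root of unity and `μ ⊆ λ`, `W(λ,q,t) = W(μ,q,t)` iff
every diagonal of `λ/μ` is `(q,t)`-paired with a diagonal of `λ/μ` of the same length. -/
theorem WFun_eq_iff_skew_paired
    (q t : ℂˣ) (hq : ∀ k : ℕ, 0 < k → q ^ k ≠ 1)
    (mu lam : YoungDiagram) (h : mu ≤ lam) :
    WFun q t lam = WFun q t mu ↔
      ∀ i : ℤ, 0 < skewDiagCount lam mu i →
        ∃ j : ℤ, skewDiagCount lam mu j = skewDiagCount lam mu i ∧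
          (t * q ^ (2 * i)) * (t * q ^ (2 * j)) = 1 := by
  classical
  have hsub : mu.cells ⊆ lam.cells := YoungDiagram.cells_subset_iff.mpr h
  set s : Finset (ℕ × ℕ) := lam.cells \ mu.cells with hs
  set fN : ℕ × ℕ → ℂ[X] := fun c => 1 - C ((xv q t (cellContent c))⁻¹) * X with hfN
  set fD : ℕ × ℕ → ℂ[X] := fun c => 1 - C (xv q t (cellContent c)) * X with hfD
  have hNμ : (∏ c ∈ mu.cells, fN c) ≠ 0 :=
    Finset.prod_ne_zero_iff.mpr fun c _ => factor_ne_zero _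
  have hDμ : (∏ c ∈ mu.cells, fD c) ≠ 0 :=
    Finset.prod_ne_zero_iff.mpr fun c _ => factor_ne_zero _
  have hDlam : (∏ c ∈ lam.cells, fD c) ≠ 0 :=
    Finset.prod_ne_zero_iff.mpr fun c _ => factor_ne_zero _
  have step1 : (WFun q t lam = WFun q t mu) ↔
      (∏ c ∈ s, fN c) = (∏ c ∈ s, fD c) := by
    rw [WFun_eq, WFun_eq,
      div_eq_div_iff (RatFunc.algebraMap_ne_zero hDlam) (RatFunc.algebraMap_ne_zero hDμ),
      ← map_mul, ← map_mul, (RatFunc.algebraMap_injective ℂ).eq_iff,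
      ← Finset.prod_sdiff (f := fN) hsub, ← Finset.prod_sdiff (f := fD) hsub]
    rw [show (∏ c ∈ s, fN c) * (∏ c ∈ mu.cells, fN c) * (∏ c ∈ mu.cells, fD c)
        = (∏ c ∈ s, fN c) * ((∏ c ∈ mu.cells, fN c) * (∏ c ∈ mu.cells, fD c)) by ring,
      show (∏ c ∈ mu.cells, fN c) * ((∏ c ∈ s, fD c) * (∏ c ∈ mu.cells, fD c))
        = (∏ c ∈ s, fD c) * ((∏ c ∈ mu.cells, fN c) * (∏ c ∈ mu.cells, fD c)) by ring,
      mul_left_inj' (mul_ne_zero hNμ hDμ)]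
  rw [step1, key q t hq cellContent s]
  apply forall_congr'
  intro i
  apply imp_congr_right
  intro _
  apply exists_congr
  intro j
  apply and_congr_right
  intro _
  rw [← Units.val_inj]
  simp [xv, Units.val_zpow_eq_zpow_val]
end
end

section
/- Let λ and μ be Young diagrams and let λ ⊓ μ denote their intersection (the infimum in the lattice of Young diagrams). Then for every integer i, the number of cells of λ ⊓ μ of content i equals min(m_λ(i), m_μ(i)). Consequently, the set of contents of cells of λ\(λ⊓μ) is disjoint from the set of contents of cells of μ\(λ⊓μ). -/
noncomputable section

lemma downclosed_eq_range (B : Finset ℕ) (h : ∀ m n, m ≤ n → n ∈ B → m ∈ B) :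
    B = Finset.range B.card := by
  ext x
  simp only [Finset.mem_range]
  constructor
  · intro hx
    have hsub : Finset.range (x + 1) ⊆ B := fun m hm =>
      h m x (Nat.lt_succ_iff.mp (Finset.mem_range.mp hm)) hx
    have := Finset.card_le_card hsub
    simpa using this
  · intro hx
    by_contra hxB
    have hsub : B ⊆ Finset.range x := by
      intro b hb
      simp only [Finset.mem_range]
      by_contra hbx
      exact hxB (h x b (le_of_not_gt hbx) hb)
    have h2 := Finset.card_le_card hsub
    simp only [Finset.card_range] at h2
    omega

/-- rows of cells of content `d` in `lam`. -/
def diagRows (lam : YoungDiagram) (d : ℤ) : Finset ℕ :=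
  (lam.cells.filter (fun c => cellContent c = d)).image Prod.fst

lemma mem_diagRows {lam : YoungDiagram} {d : ℤ} {i : ℕ} :
    i ∈ diagRows lam d ↔ 0 ≤ (i : ℤ) + d ∧ (i, ((i : ℤ) + d).toNat) ∈ lam := by
  simp only [diagRows, Finset.mem_image, Finset.mem_filter, YoungDiagram.mem_cells]
  constructor
  · rintro ⟨⟨a, b⟩, ⟨hmem, hc⟩, rfl⟩
    simp only [cellContent] at hc
    have hb : (b : ℤ) = (a : ℤ) + d := by linarith
    constructor
    · rw [← hb]; positivity
    · have : ((a : ℤ) + d).toNat = b := by rw [← hb]; exact Int.toNat_natCast b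
      rwa [this]
  · rintro ⟨h0, hmem⟩
    exact ⟨(i, ((i : ℤ) + d).toNat), ⟨hmem, by
      simp [cellContent, Int.toNat_of_nonneg h0]⟩, rfl⟩

lemma card_diagRows (lam : YoungDiagram) (d : ℤ) :
    (diagRows lam d).card = diagCount lam d := by
  rw [diagRows, diagCount]
  apply Finset.card_image_of_injOn
  rintro ⟨a, b⟩ ha ⟨a', b'⟩ ha' (h : a = a')
  simp only [Finset.coe_filter, Finset.mem_filter, Set.mem_setOf_eq, cellContent] at ha ha'
  subst h
  have : (b : ℤ) = b' := by linarith [(Finset.mem_filter.mp ha).2, (Finset.mem_filter.mp ha').2]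
  exact Prod.ext rfl (by exact_mod_cast this)

lemma diagRows_eq_Ico (lam : YoungDiagram) (d : ℤ) :
    diagRows lam d = Finset.Ico (-d).toNat ((-d).toNat + diagCount lam d) := by
  set i0 := (-d).toNat with hi0
  have hlb : ∀ i ∈ diagRows lam d, i0 ≤ i := by
    intro i hi
    have h0 := (mem_diagRows.mp hi).1
    omega
  have hkey : diagRows lam d = (Finset.range (diagCount lam d)).image (· + i0) := by
    have hB : (diagRows lam d).image (· - i0) = Finset.range (diagCount lam d) := by
      rw [← card_diagRows lam d]
      have hcard : ((diagRows lam d).image (· - i0)).card = (diagRows lam d).card := by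
        apply Finset.card_image_of_injOn
        intro a ha b hb hab
        have h1 := hlb a ha; have h2 := hlb b hb
        simp only at hab
        omega
      rw [← hcard]
      apply downclosed_eq_range
      intro m n hmn hn
      simp only [Finset.mem_image] at hn ⊢
      obtain ⟨i, hi, rfl⟩ := hn
      have hi0i := hlb i hi
      refine ⟨m + i0, ?_, by omega⟩
      obtain ⟨h0, hmem⟩ := mem_diagRows.mp hi
      rw [mem_diagRows]
      constructor
      · omega
      · refine lam.up_left_mem (i1 := m + i0) (j1 := (((m + i0 : ℕ) : ℤ) + d).toNat)
          (i2 := i) (j2 := ((i : ℤ) + d).toNat) (by omega) (by omega) hmem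
    ext x
    rw [← hB]
    simp only [Finset.mem_image]
    constructor
    · intro hx
      exact ⟨x - i0, ⟨x, hx, rfl⟩, by have := hlb x hx; omega⟩
    · rintro ⟨y, ⟨z, hz, rfl⟩, rfl⟩
      have := hlb z hz
      have : z - i0 + i0 = z := by omega
      rwa [this]
  rw [hkey]
  ext x
  simp only [Finset.mem_image, Finset.mem_range, Finset.mem_Ico]
  constructor
  · rintro ⟨y, hy, rfl⟩; omega
  · intro hx; exact ⟨x - i0, by omega, by omega⟩



lemma diagRows_inf (lam mu : YoungDiagram) (d : ℤ) :
    diagRows (lam ⊓ mu) d = diagRows lam d ∩ diagRows mu d := by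
  ext i
  simp only [Finset.mem_inter, mem_diagRows, YoungDiagram.mem_inf]
  tauto

lemma skewDiagCount_inf_left (lam mu : YoungDiagram) (d : ℤ) :
    skewDiagCount lam (lam ⊓ mu) d = diagCount lam d - diagCount (lam ⊓ mu) d := by
  rw [skewDiagCount, diagCount, diagCount]
  rw [show (lam.cells \ (lam ⊓ mu).cells).filter (fun c => cellContent c = d)
      = lam.cells.filter (fun c => cellContent c = d) \
        (lam ⊓ mu).cells.filter (fun c => cellContent c = d) by
    ext c
    simp only [Finset.mem_filter, Finset.mem_sdiff]
    tauto]
  apply Finset.card_sdiff_of_subset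
  intro c hc
  simp only [Finset.mem_filter, YoungDiagram.mem_cells, YoungDiagram.mem_inf] at hc ⊢
  tauto

/-- For Young diagrams `λ, μ` with intersection `λ ⊓ μ`:
`m_{λ⊓μ}(i) = min (m_λ(i)) (m_μ(i))` for every `i`, and consequently the contents of
cells of `λ\(λ⊓μ)` and of `μ\(λ⊓μ)` form disjoint sets. -/
theorem diagCount_inf_and_skew_contents_disjoint
    (lam mu : YoungDiagram) :
    (∀ i : ℤ, diagCount (lam ⊓ mu) i = min (diagCount lam i) (diagCount mu i)) ∧
    Disjoint {i : ℤ | 0 < skewDiagCount lam (lam ⊓ mu) i}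
             {i : ℤ | 0 < skewDiagCount mu (lam ⊓ mu) i} := by
  have hmin : ∀ i : ℤ, diagCount (lam ⊓ mu) i = min (diagCount lam i) (diagCount mu i) := by
    intro i
    have h := diagRows_inf lam mu i
    rw [diagRows_eq_Ico (lam ⊓ mu) i, diagRows_eq_Ico lam i, diagRows_eq_Ico mu i,
      Finset.Ico_inter_Ico] at h
    have hc := congrArg Finset.card h
    rw [Nat.card_Ico, Nat.card_Ico] at hc
    omega
  refine ⟨hmin, ?_⟩
  rw [Set.disjoint_left]
  intro i hi1 hi2
  simp only [Set.mem_setOf_eq] at hi1 hi2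
  rw [skewDiagCount_inf_left lam mu i] at hi1
  have hi2' : 0 < diagCount mu i - diagCount (lam ⊓ mu) i := by
    rwa [show lam ⊓ mu = mu ⊓ lam from inf_comm lam mu, skewDiagCount_inf_left mu lam i,
      show mu ⊓ lam = lam ⊓ mu from inf_comm mu lam] at hi2
  have := hmin i
  omega
end
end

section
/- Let n ≥ 2, let q be a nonzero complex number that is not a root of unity, let a be an integer with 0 ≤ a ≤ ⌊n/2⌋ − 2, and set t = q^{2a}. Let λ and μ be Young diagrams with |λ| ≤ n, |μ| ≤ n and |λ| ≡ |μ| ≡ n (mod 2), and write ν = λ ⊓ μ for their intersection. Then W(λ,q,t) = W(μ,q,t) if and only if both of the following hold: for every integer i with m_{λ/ν}(i) > 0 there exists an integer j with m_{λ/ν}(j) = m_{λ/ν}(i) and (t·q^{2i})·(t·q^{2j}) = 1, and for every integer i with m_{μ/ν}(i) > 0 there exists an integer j with m_{μ/ν}(j) = m_{μ/ν}(i) and (t·q^{2i})·(t·q^{2j}) = 1. -/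
noncomputable section

open Polynomial in
/-- Auxiliary: `1 - C z * X` is a nonzero polynomial. -/
lemma aux_onesub_ne_zero (z : ℂ) : (1 - C z * X : ℂ[X]) ≠ 0 := by
  intro h
  have := congrArg (Polynomial.eval 0) h
  simp at this

open Polynomial in
lemma aux_roots_onesub {z : ℂ} (hz : z ≠ 0) : (1 - C z * X : ℂ[X]).roots = {z⁻¹} := by
  have h : (1 - C z * X : ℂ[X]) = C (-z) * (X - C z⁻¹) := by
    rw [mul_sub, ← C_mul, map_neg, neg_mul, neg_mul, mul_inv_cancel₀ hz]
    simp only [map_neg, map_one]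
    ring
  rw [h, roots_C_mul _ (neg_ne_zero.mpr hz), roots_X_sub_C]

open Polynomial in
/-- Products of `1 - C z * X` over multisets of nonzero numbers determine the multiset. -/
lemma aux_prod_onesub_eq_iff {s s' : Multiset ℂ} (hs : ∀ z ∈ s, z ≠ 0)
    (hs' : ∀ z ∈ s', z ≠ 0) :
    (s.map fun z => 1 - C z * X).prod = (s'.map fun z => 1 - C z * X).prod ↔ s = s' := by
  constructor
  · intro h
    have key : ∀ (u : Multiset ℂ), (∀ z ∈ u, z ≠ 0) →
        ((u.map fun z => (1 - C z * X : ℂ[X])).prod).roots = u.map (·⁻¹) := by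
      intro u hu
      rw [Polynomial.roots_multiset_prod _ (by
        simp only [Multiset.mem_map]
        rintro ⟨z, hz, hz0⟩
        exact aux_onesub_ne_zero z hz0), Multiset.bind_map]
      rw [show (u.bind fun z => (1 - C z * X : ℂ[X]).roots)
            = u.bind (fun z => ({z⁻¹} : Multiset ℂ)) from
          Multiset.bind_congr (fun z hz => aux_roots_onesub (hu z hz)),
        Multiset.bind_singleton]
    have h2 : s.map (·⁻¹) = s'.map (·⁻¹) := by
      rw [← key s hs, ← key s' hs', h]
    exact Multiset.map_injective inv_injective h2
  · intro h; rw [h]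

/-- If `q` is not a root of unity then `q ^ m = 1` iff `m = 0`, for integer `m`. -/
lemma aux_zpow_eq_one_iff {q : ℂˣ} (hq : ∀ k : ℕ, 0 < k → q ^ k ≠ 1) {m : ℤ} :
    q ^ m = 1 ↔ m = 0 := by
  constructor
  · intro h
    by_contra hm
    rcases lt_or_gt_of_ne hm with h1 | h1
    · have h2 : q ^ ((-m).toNat : ℤ) = 1 := by
        rw [Int.toNat_of_nonneg (by omega), zpow_neg, h, inv_one]
      rw [zpow_natCast] at h2
      exact hq _ (by omega) h2
    · have h2 : q ^ ((m.toNat : ℤ)) = 1 := by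
        rw [Int.toNat_of_nonneg (by omega)]; exact h
      rw [zpow_natCast] at h2
      exact hq _ (by omega) h2
  · rintro rfl; simp

/-- The purely arithmetic heart of the equivalence. -/
lemma aux_arith {m n : ℤ → ℕ} {σ : ℤ → ℤ} (hσ : ∀ k, σ (σ k) = k)
    (hd : ∀ k, m k = 0 ∨ n k = 0) :
    (∀ k, m (σ k) + n k = n (σ k) + m k) ↔
      ((∀ i, 0 < m i → m (σ i) = m i) ∧ (∀ i, 0 < n i → n (σ i) = n i)) := by
  constructor
  · intro h
    constructor
    · intro i hi
      have h1 := h i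
      rcases hd i with h2 | h2
      · omega
      · rcases hd (σ i) with h3 | h3 <;> omega
    · intro i hi
      have h1 := h i
      rcases hd i with h2 | h2
      · rcases hd (σ i) with h3 | h3 <;> omega
      · omega
  · rintro ⟨h1, h2⟩ k
    rcases Nat.eq_zero_or_pos (m k) with hm | hm
    · rcases Nat.eq_zero_or_pos (n k) with hn | hn
      · have e3 := h1 (σ k)
        have e4 := h2 (σ k)
        rw [hσ] at e3 e4
        by_cases h5 : 0 < m (σ k)
        · have := e3 h5; omega
        · by_cases h6 : 0 < n (σ k)
          · have := e4 h6; omega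
          · omega
      · have := h2 k hn
        rcases hd (σ k) with h3 | h3 <;> omega
    · have := h1 k hm
      have h4 := hd k
      rcases hd (σ k) with h3 | h3 <;> omega

/-- On each diagonal, at most one of the two skew shapes `λ/(λ⊓μ)`, `μ/(λ⊓μ)` has cells. -/
lemma aux_skew_disjoint (lam mu : YoungDiagram) (k : ℤ) :
    skewDiagCount lam (lam ⊓ mu) k = 0 ∨ skewDiagCount mu (lam ⊓ mu) k = 0 := by
  by_contra h
  push_neg at h
  obtain ⟨h1, h2⟩ := h
  obtain ⟨c, hc⟩ := Finset.card_ne_zero.mp h1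
  obtain ⟨c', hc'⟩ := Finset.card_ne_zero.mp h2
  simp only [Finset.mem_filter, Finset.mem_sdiff, YoungDiagram.mem_cells,
    YoungDiagram.mem_inf] at hc hc'
  obtain ⟨⟨hcl, hcn⟩, hck⟩ := hc
  obtain ⟨⟨hcm', hcn'⟩, hck'⟩ := hc'
  unfold cellContent at hck hck'
  rcases le_total c.1 c'.1 with h | h
  · have hj : c.2 ≤ c'.2 := by omega
    have : (c.1, c.2) ∈ mu := mu.up_left_mem h hj (by simpa using hcm')
    exact hcn ⟨hcl, by simpa using this⟩
  · have hj : c'.2 ≤ c.2 := by omega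
    have : (c'.1, c'.2) ∈ lam := lam.up_left_mem h hj (by simpa using hcl)
    exact hcn' ⟨by simpa using this, hcm'⟩

open Polynomial in
/-- The product `∏_{c ∈ S} (1 - x(ct c)·X)`. -/
def cellPoly (x : ℤ → ℂ) (S : Finset (ℕ × ℕ)) : ℂ[X] :=
  ∏ c ∈ S, (1 - C (x (cellContent c)) * X)

lemma cellPoly_ne_zero (x : ℤ → ℂ) (S : Finset (ℕ × ℕ)) : cellPoly x S ≠ 0 :=
  Finset.prod_ne_zero_iff.mpr fun _ _ => aux_onesub_ne_zero _

lemma cellPoly_sdiff (x : ℤ → ℂ) {S T : Finset (ℕ × ℕ)} (h : T ⊆ S) :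
    cellPoly x (S \ T) * cellPoly x T = cellPoly x S :=
  Finset.prod_sdiff h

open Polynomial in
lemma cellPoly_eq_multiset (x : ℤ → ℂ) (S : Finset (ℕ × ℕ)) :
    cellPoly x S = ((S.val.map fun c => x (cellContent c)).map fun z => 1 - C z * X).prod := by
  rw [cellPoly, Finset.prod_eq_multiset_prod, Multiset.map_map]
  rfl

lemma aux_cancel {R : Type*} [CommRing R] [IsDomain R] {a b c d e f : R}
    (he : e ≠ 0) (hf : f ≠ 0) : (a * e) * (b * f) = (c * e) * (d * f) ↔ a * b = c * d := by
  rw [show (a * e) * (b * f) = (e * f) * (a * b) by ring,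
    show (c * e) * (d * f) = (e * f) * (c * d) by ring,
    mul_right_inj' (mul_ne_zero he hf)]

/-- The family of parameters `x_i = t q^{2i}` as complex numbers. -/
def xfun (q t : ℂˣ) : ℤ → ℂ := fun i => ((t * q ^ (2 * i) : ℂˣ) : ℂ)

lemma xfun_ne_zero (q t : ℂˣ) (i : ℤ) : xfun q t i ≠ 0 := Units.ne_zero _

open Polynomial in
lemma WFun_eq_div (q t : ℂˣ) (lam : YoungDiagram) :
    WFun q t lam =
      algebraMap ℂ[X] (RatFunc ℂ) (cellPoly (fun i => (xfun q t i)⁻¹) lam.cells) /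
      algebraMap ℂ[X] (RatFunc ℂ) (cellPoly (xfun q t) lam.cells) := by
  unfold WFun cellPoly xfun
  rw [map_prod, map_prod]
  congr 1 <;> refine Finset.prod_congr rfl fun c _ => ?_ <;>
    · simp only [map_sub, map_one, map_mul, RatFunc.algebraMap_C, RatFunc.algebraMap_X]
      congr 3
      simp [Units.val_mul, Units.val_zpow_eq_zpow_val, mul_inv, zpow_neg, neg_mul]
      try ring

/-- Let `n ≥ 2`, `q` not a root of unity, `0 ≤ a ≤ ⌊n/2⌋ − 2` and
`t = q^(2a)`. For Young diagrams `λ, μ` with at most `n` cells, `|λ| ≡ |μ| ≡ n (mod 2)`,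
and `ν = λ ⊓ μ`, one has `W(λ,q,t) = W(μ,q,t)` iff every diagonal of `λ/ν` is
`(q,t)`-paired with a diagonal of `λ/ν` of the same length, and likewise for `μ/ν`. -/
theorem WFun_eq_iff_both_skews_paired
    (n : ℕ) (hn : 2 ≤ n)
    (q : ℂˣ) (hq : ∀ k : ℕ, 0 < k → q ^ k ≠ 1)
    (a : ℤ) (ha0 : 0 ≤ a) (ha1 : a ≤ ((n / 2 : ℕ) : ℤ) - 2)
    (t : ℂˣ) (ht : t = q ^ (2 * a))
    (lam mu : YoungDiagram)
    (hlam : lam.card ≤ n) (hmu : mu.card ≤ n)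
    (hlpar : lam.card ≡ n [MOD 2]) (hmpar : mu.card ≡ n [MOD 2]) :
    WFun q t lam = WFun q t mu ↔
      ((∀ i : ℤ, 0 < skewDiagCount lam (lam ⊓ mu) i →
        ∃ j : ℤ, skewDiagCount lam (lam ⊓ mu) j = skewDiagCount lam (lam ⊓ mu) i ∧
          (t * q ^ (2 * i)) * (t * q ^ (2 * j)) = 1) ∧
       (∀ i : ℤ, 0 < skewDiagCount mu (lam ⊓ mu) i →
        ∃ j : ℤ, skewDiagCount mu (lam ⊓ mu) j = skewDiagCount mu (lam ⊓ mu) i ∧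
          (t * q ^ (2 * i)) * (t * q ^ (2 * j)) = 1)) := by
  classical
  -- basic consequences of the root-of-unity assumption
  have hq1 : ∀ m : ℤ, q ^ m = 1 ↔ m = 0 := fun m => aux_zpow_eq_one_iff hq
  have hpair : ∀ i j : ℤ, (t * q ^ (2 * i)) * (t * q ^ (2 * j)) = 1 ↔ j = -(2*a) - i := by
    intro i j
    rw [ht]
    rw [show (q^(2*a) * q^(2*i)) * (q^(2*a)*q^(2*j)) = q^(2*a + 2*i + (2*a + 2*j)) by
      simp only [zpow_add]; try ring]
    rw [hq1]
    omega
  have hxinj : ∀ i j : ℤ, xfun q t i = xfun q t j → i = j := by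
    intro i j h
    have h' : t * q ^ (2*i) = t * q ^ (2*j) := Units.ext h
    rw [ht, ← zpow_add, ← zpow_add] at h'
    have h2 : q ^ ((2*a + 2*i) - (2*a + 2*j)) = 1 := by
      rw [zpow_sub, h']; simp
    have := (hq1 _).mp h2
    omega
  have hxinv : ∀ i : ℤ, (xfun q t i)⁻¹ = xfun q t (-(2*a) - i) := by
    intro i
    have h' : (t * q ^ (2*i))⁻¹ = t * q ^ (2 * (-(2*a) - i)) := by
      rw [ht, ← zpow_add, ← zpow_add, ← zpow_neg]
      congr 1
      ring
    unfold xfun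
    rw [← Units.val_inv_eq_inv_val, h']
  -- abbreviations
  set ν : Finset (ℕ × ℕ) := (lam ⊓ mu).cells with hνdef
  have hsubl : ν ⊆ lam.cells := YoungDiagram.cells_subset_iff.mpr inf_le_left
  have hsubm : ν ⊆ mu.cells := YoungDiagram.cells_subset_iff.mpr inf_le_right
  -- Step 1: reduce to a polynomial identity for the skew shapes
  have step1 : (WFun q t lam = WFun q t mu) ↔
      cellPoly (fun i => (xfun q t i)⁻¹) (lam.cells \ ν) * cellPoly (xfun q t) (mu.cells \ ν)
        = cellPoly (fun i => (xfun q t i)⁻¹) (mu.cells \ ν) * cellPoly (xfun q t) (lam.cells \ ν) := by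
    rw [WFun_eq_div, WFun_eq_div,
      div_eq_div_iff (RatFunc.algebraMap_ne_zero (cellPoly_ne_zero _ _))
        (RatFunc.algebraMap_ne_zero (cellPoly_ne_zero _ _)),
      ← map_mul, ← map_mul, (RatFunc.algebraMap_injective ℂ).eq_iff,
      ← cellPoly_sdiff (fun i => (xfun q t i)⁻¹) hsubl,
      ← cellPoly_sdiff (xfun q t) hsubm,
      ← cellPoly_sdiff (fun i => (xfun q t i)⁻¹) hsubm,
      ← cellPoly_sdiff (xfun q t) hsubl]
    exact aux_cancel (cellPoly_ne_zero _ _) (cellPoly_ne_zero _ _)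
  -- Step 2: reduce the polynomial identity to a multiset identity
  set Ml : Multiset ℂ := (lam.cells \ ν).val.map (fun c => xfun q t (cellContent c)) with hMl
  set Mm : Multiset ℂ := (mu.cells \ ν).val.map (fun c => xfun q t (cellContent c)) with hMm
  have hmapinv : ∀ S : Finset (ℕ × ℕ),
      (S.val.map (fun c => xfun q t (cellContent c))).map Inv.inv
        = S.val.map fun c => (xfun q t (cellContent c))⁻¹ := by
    intro S
    rw [Multiset.map_map]
    rfl
  have hMlne : ∀ z ∈ Ml, z ≠ 0 := by
    rw [hMl]
    intro z hz
    obtain ⟨c, _, rfl⟩ := Multiset.mem_map.mp hz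
    exact xfun_ne_zero q t _
  have hMmne : ∀ z ∈ Mm, z ≠ 0 := by
    rw [hMm]
    intro z hz
    obtain ⟨c, _, rfl⟩ := Multiset.mem_map.mp hz
    exact xfun_ne_zero q t _
  have hsumne : ∀ (A B : Multiset ℂ), (∀ z ∈ A, z ≠ 0) → (∀ z ∈ B, z ≠ 0) →
      ∀ z ∈ A.map Inv.inv + B, z ≠ 0 := by
    intro A B hA hB z hz
    rcases Multiset.mem_add.mp hz with h | h
    · obtain ⟨w, hw, rfl⟩ := Multiset.mem_map.mp h
      exact inv_ne_zero (hA w hw)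
    · exact hB z h
  have step2 :
      (cellPoly (fun i => (xfun q t i)⁻¹) (lam.cells \ ν) * cellPoly (xfun q t) (mu.cells \ ν)
        = cellPoly (fun i => (xfun q t i)⁻¹) (mu.cells \ ν) * cellPoly (xfun q t) (lam.cells \ ν))
      ↔ (Ml.map Inv.inv + Mm = Mm.map Inv.inv + Ml) := by
    rw [cellPoly_eq_multiset, cellPoly_eq_multiset, cellPoly_eq_multiset, cellPoly_eq_multiset,
      ← hmapinv, ← hmapinv, ← hMl, ← hMm,
      ← Multiset.prod_add, ← Multiset.prod_add, ← Multiset.map_add, ← Multiset.map_add]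
    exact aux_prod_onesub_eq_iff (hsumne Ml Mm hMlne hMmne) (hsumne Mm Ml hMmne hMlne)
  -- Step 3: counting elements of the multisets
  have hcount : ∀ (S : Finset (ℕ × ℕ)) (k : ℤ),
      ((S.val.map fun c => xfun q t (cellContent c)).count (xfun q t k))
        = (S.filter (fun c => cellContent c = k)).card := by
    intro S k
    rw [Multiset.count_map, Finset.card_def, Finset.filter_val]
    congr 1
    apply Multiset.filter_congr
    intro c _
    constructor
    · intro h
      exact (hxinj k (cellContent c) h).symm
    · intro h
      rw [h]
  have hcl : ∀ k : ℤ, Ml.count (xfun q t k) = skewDiagCount lam (lam ⊓ mu) k := by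
    intro k
    rw [hMl, hcount]
    rfl
  have hcm : ∀ k : ℤ, Mm.count (xfun q t k) = skewDiagCount mu (lam ⊓ mu) k := by
    intro k
    rw [hMm, hcount]
    rfl
  have hzero : ∀ (S : Finset (ℕ × ℕ)) (z : ℂ), (∀ k : ℤ, xfun q t k ≠ z) →
      ((S.val.map fun c => xfun q t (cellContent c)).count z) = 0 := by
    intro S z hz
    rw [Multiset.count_eq_zero]
    intro hmem
    obtain ⟨c, _, hc⟩ := Multiset.mem_map.mp hmem
    exact hz (cellContent c) hc
  have hinvcount : ∀ (M : Multiset ℂ) (z : ℂ), (M.map Inv.inv).count z = M.count z⁻¹ := by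
    intro M z
    have h := Multiset.count_map_eq_count' Inv.inv M inv_injective z⁻¹
    rw [inv_inv] at h
    exact h
  have step3 : (Ml.map Inv.inv + Mm = Mm.map Inv.inv + Ml) ↔
      (∀ k : ℤ, skewDiagCount lam (lam ⊓ mu) (-(2*a) - k) + skewDiagCount mu (lam ⊓ mu) k
        = skewDiagCount mu (lam ⊓ mu) (-(2*a) - k) + skewDiagCount lam (lam ⊓ mu) k) := by
    rw [Multiset.ext]
    constructor
    · intro h k
      have h2 := h (xfun q t k)
      rw [Multiset.count_add, Multiset.count_add, hinvcount, hinvcount, hxinv,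
        hcl, hcl, hcm, hcm] at h2
      exact h2
    · intro h z
      rw [Multiset.count_add, Multiset.count_add, hinvcount, hinvcount]
      by_cases hz : ∃ k : ℤ, xfun q t k = z
      · obtain ⟨k, rfl⟩ := hz
        rw [hxinv, hcl, hcl, hcm, hcm]
        exact h k
      · push_neg at hz
        have hz' : ∀ k : ℤ, xfun q t k ≠ z⁻¹ := by
          intro k hk
          apply hz (-(2*a) - k)
          rw [← hxinv, hk, inv_inv]
        rw [hMl, hMm, hzero _ _ hz, hzero _ _ hz, hzero _ _ hz', hzero _ _ hz']
  -- Step 4: translate the pairing conditions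
  have hc1 : (∀ i : ℤ, 0 < skewDiagCount lam (lam ⊓ mu) i →
        ∃ j : ℤ, skewDiagCount lam (lam ⊓ mu) j = skewDiagCount lam (lam ⊓ mu) i ∧
          (t * q ^ (2 * i)) * (t * q ^ (2 * j)) = 1)
      ↔ (∀ i : ℤ, 0 < skewDiagCount lam (lam ⊓ mu) i →
          skewDiagCount lam (lam ⊓ mu) (-(2*a) - i) = skewDiagCount lam (lam ⊓ mu) i) := by
    constructor
    · intro h i hi
      obtain ⟨j, hj, hij⟩ := h i hi
      rw [(hpair i j).mp hij] at hj
      exact hj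
    · intro h i hi
      exact ⟨-(2*a) - i, h i hi, (hpair i _).mpr rfl⟩
  have hc2 : (∀ i : ℤ, 0 < skewDiagCount mu (lam ⊓ mu) i →
        ∃ j : ℤ, skewDiagCount mu (lam ⊓ mu) j = skewDiagCount mu (lam ⊓ mu) i ∧
          (t * q ^ (2 * i)) * (t * q ^ (2 * j)) = 1)
      ↔ (∀ i : ℤ, 0 < skewDiagCount mu (lam ⊓ mu) i →
          skewDiagCount mu (lam ⊓ mu) (-(2*a) - i) = skewDiagCount mu (lam ⊓ mu) i) := by
    constructor
    · intro h i hi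
      obtain ⟨j, hj, hij⟩ := h i hi
      rw [(hpair i j).mp hij] at hj
      exact hj
    · intro h i hi
      exact ⟨-(2*a) - i, h i hi, (hpair i _).mpr rfl⟩
  rw [step1, step2, step3, hc1, hc2]
  exact aux_arith (σ := fun k => -(2*a) - k)
    (m := fun k => skewDiagCount lam (lam ⊓ mu) k)
    (n := fun k => skewDiagCount mu (lam ⊓ mu) k)
    (fun k => by ring) (fun k => aux_skew_disjoint lam mu k)
end
end
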